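/- Assume 0<β_I<∞ and f̂* := sup_{w∈ℝ²} (f*f)(w) < ∞. Then for every ε∈(0,1), the transmission capacity of the Poisson clustered process is lower bounded by that of the Poisson point process: C(ε,T) ≥ C_p(ε,T) = ((1−ε)/β_I)·ln(1/(1−ε)). -/

import Mathlib

open MeasureTheory ProbabilityTheory Filter Real
open scoped ProbabilityTheory ENNReal

local notation "E2" => EuclideanSpace ℝ (Fin 2)

/-- The transmission capacity of the Poisson clustered network is lower bounded by
that of the Poisson network: `C(ε,T) ≥ C_p(ε,T) = ((1-ε)/β_I)·ln(1/(1-ε))`. -/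
theorem stmt_8
    (g f : E2 → ℝ) (T R ε : ℝ)
    (hT : 0 < T) (hR : 0 < R) (hε : 0 < ε) (hε1 : ε < 1)
    (hg_pos : ∀ x : E2, x ≠ 0 → 0 < g x)
    (hg_cont : ContinuousOn g {(0 : E2)}ᶜ)
    (hg_mono : ∀ x y : E2, x ≠ 0 → y ≠ 0 → ‖x‖ ≤ ‖y‖ → g y ≤ g x)
    (hg_int : ∀ δ : ℝ, 0 < δ → IntegrableOn g (Metric.ball (0 : E2) δ)ᶜ)
    (hf_meas : Measurable f) (hf_nonneg : ∀ x, 0 ≤ f x)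
    (hf_prob : ∫ x, f x = 1)
    (hf_iso : ∀ x y : E2, ‖x‖ = ‖y‖ → f x = f y)
    (z : E2) (hz : z = EuclideanSpace.single (0 : Fin 2) R)
    (β : E2 → ℝ)
    (hβ : ∀ y, β y = ∫ x, g (x - y - z) / (g z / T + g (x - y - z)) * f x)
    (βI : ℝ) (hβI : βI = ∫ u, g u / (g z / T + g u))
    (hβI_fin : Integrable fun u : E2 => g u / (g z / T + g u))
    (hβI_pos : 0 < βI)
    (hfstar_bdd : BddAbove (Set.range fun w : E2 => ∫ u, f u * f (w - u)))
    (P1 : ℝ → ℝ → ℝ) (P2 : ℝ → ℝ)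
    (hP1 : ∀ cbar lamp, P1 cbar lamp =
      Real.exp (-(lamp * ∫ y, (1 - Real.exp (-(cbar * β y))))))
    (hP2 : ∀ cbar, P2 cbar = ∫ y, Real.exp (-(cbar * β y)) * f y)
    (C : ℝ≥0∞)
    (hC : C = ENNReal.ofReal (1 - ε) *
      ⨆ (p : ℝ × ℝ) (_ : 0 < p.1 ∧ 0 < p.2 ∧ 1 - ε ≤ P1 p.2 p.1 * P2 p.2),
        ENNReal.ofReal (p.1 * p.2)) :
    ENNReal.ofReal ((1 - ε) / βI * Real.log (1 / (1 - ε))) ≤ C := by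
  classical
  have hz0 : z ≠ 0 := by
    rw [hz]
    intro hcon
    have h0 : (EuclideanSpace.single (0 : Fin 2) R) (0 : Fin 2) = 0 := by rw [hcon]; rfl
    rw [EuclideanSpace.single_apply] at h0
    simp at h0
    exact hR.ne' h0
  have hgz : 0 < g z := hg_pos z hz0
  have hc0 : 0 < g z / T := div_pos hgz hT
  set c0 := g z / T with hc0def
  set h' : E2 → ℝ := Set.piecewise {(0:E2)} (fun _ => 0) (fun u => g u / (c0 + g u)) with hh'
  have hh'_eq : ∀ u : E2, u ≠ 0 → h' u = g u / (c0 + g u) := by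
    intro u hu
    simp [hh', Set.piecewise, hu]
  have hh'_zero : h' 0 = 0 := by simp [hh', Set.piecewise]
  have hh'_nonneg : ∀ u, 0 ≤ h' u := by
    intro u
    by_cases hu : u = 0
    · simp [hu, hh'_zero]
    · rw [hh'_eq u hu]
      have h1 := hg_pos u hu
      positivity
  have hh'_le_one : ∀ u, h' u ≤ 1 := by
    intro u
    by_cases hu : u = 0
    · simp [hu, hh'_zero]
    · rw [hh'_eq u hu]
      have hgu := hg_pos u hu
      rw [div_le_one (by linarith)]
      linarith
  have hh'_meas : Measurable h' := by
    apply ContinuousOn.measurable_piecewise continuousOn_const _ (measurableSet_singleton 0)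
    apply ContinuousOn.div hg_cont (continuousOn_const.add hg_cont)
    intro u hu
    have := hg_pos u (by simpa using hu)
    exact (add_pos hc0 this).ne'
  have hne0 : ∀ᵐ u : E2, u ≠ 0 := by
    rw [MeasureTheory.ae_iff]
    have hset : {u : E2 | ¬ u ≠ 0} = {0} := by ext u; simp
    rw [hset]
    exact measure_singleton 0
  have h_ae : (fun u : E2 => g u / (c0 + g u)) =ᵐ[volume] h' := by
    filter_upwards [hne0] with u hu
    rw [hh'_eq u hu]
  have hh'_int : Integrable h' := hβI_fin.congr h_ae
  have hβI' : βI = ∫ u, h' u := by rw [hβI]; exact integral_congr_ae h_ae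
  have hf_int : Integrable f := by
    by_contra hcon
    rw [integral_undef hcon] at hf_prob
    norm_num at hf_prob
  have hsub_meas : ∀ y : E2, Measurable (fun x : E2 => x - y - z) :=
    fun y => (measurable_id.sub_const y).sub_const z
  have hker_meas : ∀ y, AEStronglyMeasurable (fun x : E2 => h' (x - y - z) * f x) volume :=
    fun y => ((hh'_meas.comp (hsub_meas y)).mul hf_meas).aestronglyMeasurable
  have hker_int : ∀ y, Integrable (fun x : E2 => h' (x - y - z) * f x) := by
    intro y
    apply hf_int.mono' (hker_meas y)
    filter_upwards with x
    rw [Real.norm_eq_abs, abs_of_nonneg (mul_nonneg (hh'_nonneg _) (hf_nonneg _))]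
    calc h' (x - y - z) * f x ≤ 1 * f x :=
          mul_le_mul_of_nonneg_right (hh'_le_one _) (hf_nonneg x)
    _ = f x := one_mul _
  have hβ'' : ∀ y, β y = ∫ x, h' (x - y - z) * f x := by
    intro y
    rw [hβ y]
    apply integral_congr_ae
    have hae : ∀ᵐ x : E2, x ≠ y + z := by
      rw [MeasureTheory.ae_iff]
      have hset : {x : E2 | ¬ x ≠ y + z} = {y + z} := by ext u; simp
      rw [hset]
      exact measure_singleton _
    filter_upwards [hae] with x hx
    rw [hh'_eq (x - y - z) (by
      intro hcon
      apply hx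
      have : x - (y + z) = 0 := by rw [← sub_sub]; exact hcon
      exact sub_eq_zero.mp this)]
  have hβ_nonneg : ∀ y, 0 ≤ β y := by
    intro y
    rw [hβ'' y]
    exact integral_nonneg fun x => mul_nonneg (hh'_nonneg _) (hf_nonneg _)
  have hβ_le_one : ∀ y, β y ≤ 1 := by
    intro y
    rw [hβ'' y]
    calc (∫ x, h' (x - y - z) * f x) ≤ ∫ x, f x := by
          apply integral_mono (hker_int y) hf_int
          intro x
          calc h' (x - y - z) * f x ≤ 1 * f x :=
                mul_le_mul_of_nonneg_right (hh'_le_one _) (hf_nonneg x)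
          _ = f x := one_mul _
    _ = 1 := hf_prob
  have hK_meas : Measurable (fun p : E2 × E2 => h' (p.2 - p.1 - z) * f p.2) :=
    (hh'_meas.comp ((measurable_snd.sub measurable_fst).sub_const z)).mul
      (hf_meas.comp measurable_snd)
  have hβ_sm : StronglyMeasurable β := by
    have h := MeasureTheory.StronglyMeasurable.integral_prod_right'
      (ν := (volume : Measure E2)) hK_meas.stronglyMeasurable
    have : β = fun y => ∫ x, h' (x - y - z) * f x := funext hβ''
    rw [this]
    exact h
  have hof : ∀ y, ENNReal.ofReal (β y) = ∫⁻ x, ENNReal.ofReal (h' (x - y - z) * f x) := by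
    intro y
    rw [hβ'' y]
    exact MeasureTheory.ofReal_integral_eq_lintegral_ofReal (hker_int y)
      (Filter.Eventually.of_forall fun x => mul_nonneg (hh'_nonneg _) (hf_nonneg _))
  have hintf_lint : ∫⁻ x : E2, ENNReal.ofReal (f x) = 1 := by
    rw [← MeasureTheory.ofReal_integral_eq_lintegral_ofReal hf_int
      (Filter.Eventually.of_forall hf_nonneg), hf_prob, ENNReal.ofReal_one]
  have hh'_lint : ∫⁻ u : E2, ENNReal.ofReal (h' u) = ENNReal.ofReal βI := by
    rw [← MeasureTheory.ofReal_integral_eq_lintegral_ofReal hh'_int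
      (Filter.Eventually.of_forall hh'_nonneg), hβI']
  have key : ∫⁻ y : E2, ENNReal.ofReal (β y) = ENNReal.ofReal βI := by
    calc ∫⁻ y : E2, ENNReal.ofReal (β y)
        = ∫⁻ y : E2, ∫⁻ x : E2, ENNReal.ofReal (h' (x - y - z) * f x) :=
          lintegral_congr hof
      _ = ∫⁻ x : E2, ∫⁻ y : E2, ENNReal.ofReal (h' (x - y - z) * f x) := by
          apply lintegral_lintegral_swap
          exact (ENNReal.measurable_ofReal.comp hK_meas).aemeasurable
      _ = ∫⁻ x : E2, ENNReal.ofReal βI * ENNReal.ofReal (f x) := by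
          apply lintegral_congr
          intro x
          have hm1 : Measurable (fun y : E2 => ENNReal.ofReal (h' (x - z - y))) :=
            ENNReal.measurable_ofReal.comp (hh'_meas.comp (measurable_const.sub measurable_id))
          have hmp : MeasurePreserving (fun t : E2 => (x - z) - t) volume volume := by
            have h1 := Measure.measurePreserving_neg (volume : Measure E2)
            have h2 := measurePreserving_add_left (volume : Measure E2) (x - z)
            simpa [Function.comp_def, sub_eq_add_neg] using h2.comp h1
          have hsub : ∫⁻ (y : E2), ENNReal.ofReal (h' (x - z - y))
              = ∫⁻ u : E2, ENNReal.ofReal (h' u) :=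
            hmp.lintegral_comp (ENNReal.measurable_ofReal.comp hh'_meas)
          calc ∫⁻ y : E2, ENNReal.ofReal (h' (x - y - z) * f x)
              = ∫⁻ y : E2, ENNReal.ofReal (h' (x - z - y)) * ENNReal.ofReal (f x) := by
                apply lintegral_congr
                intro y
                rw [ENNReal.ofReal_mul (hh'_nonneg _), sub_right_comm]
            _ = (∫⁻ y : E2, ENNReal.ofReal (h' (x - z - y))) * ENNReal.ofReal (f x) :=
                lintegral_mul_const _ hm1
            _ = ENNReal.ofReal βI * ENNReal.ofReal (f x) := by rw [hsub, hh'_lint]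
      _ = ENNReal.ofReal βI * ∫⁻ x : E2, ENNReal.ofReal (f x) :=
          lintegral_const_mul _ (ENNReal.measurable_ofReal.comp hf_meas)
      _ = ENNReal.ofReal βI := by rw [hintf_lint, mul_one]
  have hβ_int : Integrable β := by
    refine ⟨hβ_sm.aestronglyMeasurable, ?_⟩
    rw [HasFiniteIntegral]
    have heq : ∀ y, ‖β y‖ₑ = ENNReal.ofReal (β y) := fun y =>
      Real.enorm_eq_ofReal (hβ_nonneg y)
    rw [lintegral_congr heq, key]
    exact ENNReal.ofReal_lt_top
  have hβ_integral : ∫ y, β y = βI := by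
    rw [MeasureTheory.integral_eq_lintegral_of_nonneg_ae
      (Filter.Eventually.of_forall hβ_nonneg) hβ_sm.aestronglyMeasurable, key,
      ENNReal.toReal_ofReal hβI_pos.le]
  -- main construction
  have h1ε : 0 < 1 - ε := by linarith
  set L := Real.log (1 / (1 - ε)) with hL
  have hLpos : 0 < L := Real.log_pos (by rw [lt_div_iff₀ h1ε]; linarith)
  set K := L / βI with hK
  have hKβI : K * βI = L := div_mul_cancel₀ L hβI_pos.ne'
  have hKpos : 0 < K := div_pos hLpos hβI_pos
  have main : ∀ a : ℝ, 0 < a → a < K →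
      ENNReal.ofReal a ≤ ⨆ (p : ℝ × ℝ)
        (_ : 0 < p.1 ∧ 0 < p.2 ∧ 1 - ε ≤ P1 p.2 p.1 * P2 p.2),
        ENNReal.ofReal (p.1 * p.2) := by
    intro a ha haK
    set cb := (K - a) * βI with hcb
    have hcb_pos : 0 < cb := mul_pos (by linarith) hβI_pos
    set lam := a / cb with hlam
    have hlam_pos : 0 < lam := div_pos ha hcb_pos
    have hprod : lam * cb = a := div_mul_cancel₀ a hcb_pos.ne'
    have hexp_le : ∀ y, 1 - Real.exp (-(cb * β y)) ≤ cb * β y := by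
      intro y
      have := Real.add_one_le_exp (-(cb * β y))
      linarith
    have hexp_nonneg : ∀ y, 0 ≤ 1 - Real.exp (-(cb * β y)) := by
      intro y
      have h1 : Real.exp (-(cb * β y)) ≤ Real.exp 0 := by
        apply Real.exp_le_exp.mpr
        have := mul_nonneg hcb_pos.le (hβ_nonneg y)
        linarith
      rw [Real.exp_zero] at h1
      linarith
    have hcbβ_int : Integrable (fun y => cb * β y) := hβ_int.const_mul cb
    have hexp_meas : Measurable (fun y : E2 => Real.exp (-(cb * β y))) :=
      ((hβ_sm.measurable.const_mul cb).neg).exp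
    have hI_meas : AEStronglyMeasurable (fun y : E2 => 1 - Real.exp (-(cb * β y))) volume :=
      (measurable_const.sub hexp_meas).aestronglyMeasurable
    have hI_int : Integrable (fun y : E2 => 1 - Real.exp (-(cb * β y))) := by
      apply hcbβ_int.mono' hI_meas
      filter_upwards with y
      rw [Real.norm_eq_abs, abs_of_nonneg (hexp_nonneg y)]
      exact hexp_le y
    have hI_le : (∫ y, (1 - Real.exp (-(cb * β y)))) ≤ cb * βI := by
      calc (∫ y, (1 - Real.exp (-(cb * β y)))) ≤ ∫ y, cb * β y :=
            integral_mono hI_int hcbβ_int hexp_le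
      _ = cb * βI := by rw [integral_const_mul, hβ_integral]
    have hP1_ge : Real.exp (-(a * βI)) ≤ P1 cb lam := by
      rw [hP1]
      apply Real.exp_le_exp.mpr
      have h1 : lam * (∫ y, (1 - Real.exp (-(cb * β y)))) ≤ lam * (cb * βI) :=
        mul_le_mul_of_nonneg_left hI_le hlam_pos.le
      have h2 : lam * (cb * βI) = a * βI := by rw [← mul_assoc, hprod]
      linarith
    have hP2int1 : Integrable (fun y : E2 => Real.exp (-(cb * β y)) * f y) := by
      apply hf_int.mono' ((hexp_meas.mul hf_meas).aestronglyMeasurable)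
      filter_upwards with y
      simp only [Pi.mul_apply]
      rw [Real.norm_eq_abs, abs_of_nonneg (mul_nonneg (Real.exp_pos _).le (hf_nonneg y))]
      have h1 : Real.exp (-(cb * β y)) ≤ 1 := by
        rw [← Real.exp_zero]
        apply Real.exp_le_exp.mpr
        have := mul_nonneg hcb_pos.le (hβ_nonneg y)
        linarith
      calc Real.exp (-(cb * β y)) * f y ≤ 1 * f y :=
            mul_le_mul_of_nonneg_right h1 (hf_nonneg y)
      _ = f y := one_mul _
    have hP2_ge : Real.exp (-cb) ≤ P2 cb := by
      rw [hP2]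
      calc Real.exp (-cb) = ∫ y, Real.exp (-cb) * f y := by
            rw [integral_const_mul, hf_prob, mul_one]
      _ ≤ ∫ y, Real.exp (-(cb * β y)) * f y := by
            apply integral_mono (hf_int.const_mul _) hP2int1
            intro y
            apply mul_le_mul_of_nonneg_right _ (hf_nonneg y)
            apply Real.exp_le_exp.mpr
            have h1 := hβ_le_one y
            nlinarith [hβ_nonneg y, hcb_pos]
    have hfeas : 1 - ε ≤ P1 cb lam * P2 cb := by
      have h1 : Real.exp (-(a * βI)) * Real.exp (-cb) ≤ P1 cb lam * P2 cb :=
        mul_le_mul hP1_ge hP2_ge (Real.exp_pos _).le (le_trans (Real.exp_pos _).le hP1_ge)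
      have h2 : Real.exp (-(a * βI)) * Real.exp (-cb) = 1 - ε := by
        rw [← Real.exp_add]
        have h3 : -(a * βI) + -cb = -L := by rw [hcb, ← hKβI]; ring
        rw [h3]
        have h4 : -L = Real.log (1 - ε) := by
          rw [hL, one_div, Real.log_inv, neg_neg]
        rw [h4, Real.exp_log h1ε]
      linarith
    refine le_iSup₂_of_le (lam, cb) ⟨hlam_pos, hcb_pos, hfeas⟩ ?_
    simp only []
    rw [hprod]
  have hSK : ENNReal.ofReal K ≤ ⨆ (p : ℝ × ℝ)
      (_ : 0 < p.1 ∧ 0 < p.2 ∧ 1 - ε ≤ P1 p.2 p.1 * P2 p.2),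
      ENNReal.ofReal (p.1 * p.2) := by
    refine le_of_forall_lt fun c hc => ?_
    have hcne : c ≠ ⊤ := (hc.trans_le le_top).ne
    have hr : c.toReal < K := (ENNReal.lt_ofReal_iff_toReal_lt hcne).mp hc
    set r := c.toReal with hrdef
    set a := (max r 0 + K) / 2 with hadef
    have hmax : max r 0 < K := max_lt hr hKpos
    have ha0 : 0 < a := by
      have : (0:ℝ) ≤ max r 0 := le_max_right _ _
      rw [hadef]; linarith
    have haK : a < K := by rw [hadef]; linarith
    have hra : r < a := by
      have h1 : r ≤ max r 0 := le_max_left _ _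
      rw [hadef]; linarith
    calc c = ENNReal.ofReal r := (ENNReal.ofReal_toReal hcne).symm
    _ < ENNReal.ofReal a := (ENNReal.ofReal_lt_ofReal_iff ha0).mpr hra
    _ ≤ _ := main a ha0 haK
  rw [hC]
  have hfin : (1 - ε) / βI * Real.log (1 / (1 - ε)) = (1 - ε) * K := by
    rw [hK, hL]; ring
  rw [hfin, ENNReal.ofReal_mul h1ε.le]
  exact mul_le_mul_right hSK _
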